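/- arXiv:1602.08319 — 3 statements merged into one kernel-verified Lean document; each statement's English description precedes it below -/
import Mathlib

section
/- Let $d\ge 2$, $\alpha>0$, $n>2$. For $\eta > 0$ satisfying $\alpha^2\,\eta\,(\eta+n-2) = d-1$, the function $f(s)=s^\eta$ solves the eigenvalue ODE $-\alpha^2\,\frac{d}{ds}\big[\frac{s^{n-1}}{(1+s^2)^\delta} f'(s)\big] + \frac{(d-1)\,s^{n-3}}{(1+s^2)^\delta} f(s) - \frac{\Lambda\, s^{n-1}}{(1+s^2)^{\delta+1}} f(s) = 0$ for all $s>0$, with $\Lambda = 2\,\alpha^2\,\delta\,\eta$. -/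
open Real

theorem stmt_3 (d : ℕ) (hd : 2 ≤ d) (α n δ η Λ : ℝ) (hα : 0 < α) (hn : 2 < n)
    (hδ : 0 < δ) (hη : 0 < η) (heq : α ^ 2 * η * (η + n - 2) = (d : ℝ) - 1)
    (hΛ : Λ = 2 * α ^ 2 * δ * η) :
    ∀ s : ℝ, 0 < s →
      - α ^ 2 * deriv (fun t : ℝ => t ^ (n - 1) / (1 + t ^ 2) ^ δ * deriv (fun r : ℝ => r ^ η) t) s
        + ((d : ℝ) - 1) * s ^ (n - 3) / (1 + s ^ 2) ^ δ * s ^ η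
        - Λ * s ^ (n - 1) / (1 + s ^ 2) ^ (δ + 1) * s ^ η = 0 := by
  intro s hs
  have hB : (0:ℝ) < 1 + s ^ 2 := by positivity
  -- eventual equality with explicit function
  have hE : (fun t : ℝ => t ^ (n - 1) / (1 + t ^ 2) ^ δ * deriv (fun r : ℝ => r ^ η) t)
      =ᶠ[nhds s] (fun t : ℝ => η * t ^ (n + η - 2) * ((1 + t ^ 2) ^ (-δ))) := by
    filter_upwards [eventually_gt_nhds hs] with t ht
    have htB : (0:ℝ) < 1 + t ^ 2 := by positivity
    rw [Real.deriv_rpow_const t η]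
    rw [Real.rpow_neg htB.le]
    rw [div_eq_mul_inv]
    have : t ^ (n - 1) * (η * t ^ (η - 1)) = η * t ^ (n + η - 2) := by
      rw [mul_comm, mul_assoc, ← Real.rpow_add ht]
      ring_nf
    rw [mul_right_comm, this]
  rw [hE.deriv_eq]
  have h1 : HasDerivAt (fun t : ℝ => t ^ (n + η - 2)) ((n + η - 2) * s ^ (n + η - 3)) s := by
    have := Real.hasDerivAt_rpow_const (p := n + η - 2) (Or.inl hs.ne')
    convert this using 2
    ring_nf
  have h2 : HasDerivAt (fun t : ℝ => (1 + t ^ 2) ^ (-δ))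
      ((2 * s) * (-δ) * (1 + s ^ 2) ^ (-δ - 1)) s := by
    have hb : HasDerivAt (fun t : ℝ => 1 + t ^ 2) (2 * s) s := by
      simpa using ((hasDerivAt_pow 2 s).const_add 1)
    exact hb.rpow_const (Or.inl hB.ne')
  have hD : HasDerivAt (fun t : ℝ => η * t ^ (n + η - 2) * ((1 + t ^ 2) ^ (-δ)))
      (η * ((n + η - 2) * s ^ (n + η - 3)) * ((1 + s ^ 2) ^ (-δ))
        + η * s ^ (n + η - 2) * ((2 * s) * (-δ) * (1 + s ^ 2) ^ (-δ - 1))) s := by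
    simpa [Pi.mul_def, mul_assoc, mul_comm, mul_left_comm] using ((h1.const_mul η).mul h2)
  rw [hD.deriv]
  -- algebraic identity
  have e1 : s ^ (n + η - 2) = s ^ (n + η - 3) * s := by
    rw [show n + η - 2 = (n + η - 3) + 1 by ring, Real.rpow_add_one hs.ne']
  have e2 : s ^ (n - 3) * s ^ η = s ^ (n + η - 3) := by
    rw [← Real.rpow_add hs]; ring_nf
  have e3 : s ^ (n - 1) * s ^ η = s ^ (n + η - 3) * s * s := by
    rw [← Real.rpow_add hs, show n - 1 + η = (n + η - 3) + 1 + 1 by ring,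
      Real.rpow_add_one hs.ne', Real.rpow_add_one hs.ne']
  have e4 : (1 + s ^ 2) ^ (-δ) = ((1 + s ^ 2) ^ δ)⁻¹ := by
    rw [Real.rpow_neg hB.le]
  have e5 : (1 + s ^ 2) ^ (-δ - 1) = ((1 + s ^ 2) ^ δ * (1 + s ^ 2))⁻¹ := by
    rw [show -δ - 1 = -(δ + 1) by ring, Real.rpow_neg hB.le, Real.rpow_add hB,
      Real.rpow_one]
  have e6 : (1 + s ^ 2) ^ (δ + 1) = (1 + s ^ 2) ^ δ * (1 + s ^ 2) := by
    rw [Real.rpow_add hB, Real.rpow_one]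
  have hBδ : (0:ℝ) < (1 + s ^ 2) ^ δ := Real.rpow_pos_of_pos hB δ
  rw [e1, e4, e5, e6, ← heq, hΛ]
  have : ((d:ℝ) - 1) = α ^ 2 * η * (η + n - 2) := heq.symm
  have e2' : α ^ 2 * η * (η + n - 2) * s ^ (n - 3) / (1 + s ^ 2) ^ δ * s ^ η = α ^ 2 * η * (η + n - 2) * (s ^ (n - 3) * s ^ η) / (1 + s ^ 2) ^ δ := by ring
  have e3' : 2 * α ^ 2 * δ * η * s ^ (n - 1) / ((1 + s ^ 2) ^ δ * (1 + s ^ 2)) * s ^ η = 2 * α ^ 2 * δ * η * (s ^ (n - 1) * s ^ η) / ((1 + s ^ 2) ^ δ * (1 + s ^ 2)) := by ring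
  rw [e2', e3', e2, e3]
  field_simp
  ring
end

section
/- Let $\alpha>0$, $n>0$, $\delta > 1 + n/2$. The function $f(s)=s^2 - \frac{n}{2\delta-n}$ solves the radial eigenvalue ODE $-\alpha^2\,\frac{d}{ds}\big[\frac{s^{n-1}}{(1+s^2)^\delta} f'(s)\big] - \frac{\Lambda\, s^{n-1}}{(1+s^2)^{\delta+1}} f(s) = 0$ for all $s>0$, with $\Lambda = 2\,\alpha^2\,(2\delta-n)$. -/
open Real

theorem stmt_4 (α n δ Λ : ℝ) (hα : 0 < α) (hn : 0 < n) (hδ : 1 + n / 2 < δ)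
    (hΛ : Λ = 2 * α ^ 2 * (2 * δ - n)) :
    ∀ s : ℝ, 0 < s →
      - α ^ 2 * deriv (fun t : ℝ => t ^ (n - 1) / (1 + t ^ 2) ^ δ *
          deriv (fun r : ℝ => r ^ (2 : ℕ) - n / (2 * δ - n)) t) s
        - Λ * s ^ (n - 1) / (1 + s ^ 2) ^ (δ + 1) * (s ^ (2 : ℕ) - n / (2 * δ - n)) = 0 := by
  intro s hs
  have hdn : 2 * δ - n > 0 := by nlinarith
  have h1 : (fun t : ℝ => t ^ (n - 1) / (1 + t ^ 2) ^ δ *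
          deriv (fun r : ℝ => r ^ (2 : ℕ) - n / (2 * δ - n)) t)
      = (fun t : ℝ => t ^ (n - 1) / (1 + t ^ 2) ^ δ * (2 * t)) := by
    funext t
    congr 1
    rw [deriv_fun_sub (by fun_prop) (by fun_prop)]
    simp [mul_comm]
  rw [h1]
  have hpos : (0:ℝ) < 1 + s ^ 2 := by positivity
  have hA : HasDerivAt (fun t : ℝ => t ^ (n - 1)) ((n - 1) * s ^ (n - 1 - 1)) s :=
    Real.hasDerivAt_rpow_const (Or.inl hs.ne')
  have hB : HasDerivAt (fun t : ℝ => (1 + t ^ 2) ^ δ)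
      (δ * (1 + s ^ 2) ^ (δ - 1) * (2 * s)) s := by
    have h : HasDerivAt (fun t : ℝ => 1 + t ^ 2) (2 * s) s := by
      simpa using ((hasDerivAt_pow 2 s).const_add 1)
    have := h.rpow_const (p := δ) (Or.inl hpos.ne')
    convert this using 1
    ring
  have hBne : (1 + s ^ 2) ^ δ ≠ 0 := (Real.rpow_pos_of_pos hpos δ).ne'
  have hC := ((hA.fun_div hB hBne).fun_mul ((hasDerivAt_id s).const_mul 2))
  simp only [id_eq] at hC
  rw [hC.deriv]
  have e1 : s ^ (n - 1 - 1) = s ^ (n - 1) / s := by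
    rw [Real.rpow_sub hs, Real.rpow_one]
  have e2 : (1 + s ^ 2) ^ (δ - 1) = (1 + s ^ 2) ^ δ / (1 + s ^ 2) := by
    rw [Real.rpow_sub hpos, Real.rpow_one]
  have e3 : (1 + s ^ 2) ^ (δ + 1) = (1 + s ^ 2) ^ δ * (1 + s ^ 2) := by
    rw [Real.rpow_add hpos, Real.rpow_one]
  rw [e1, e2, e3, hΛ]
  have hdn' : 2 * δ - n ≠ 0 := hdn.ne'
  field_simp
  linear_combination (2 * α ^ 2 * n * s ^ (n - 1)) * mul_inv_cancel₀ hdn'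
end

section
/- Let $d\ge 2$, $\alpha>0$, $n>2$, $\delta>1$ with $2\delta>n$, and let $\eta>0$ solve $\eta(\eta+n-2)=(d-1)/\alpha^2$. Then $\Lambda_{0,1} := 2\alpha^2\delta\eta < \Lambda_{1,0} := 2\alpha^2(2\delta-n)$ if and only if $\alpha^2 > \frac{(d-1)\,\delta^2}{n\,(2\delta-n)\,(\delta-1)}$. -/
theorem stmt_7 (d : ℕ) (hd : 2 ≤ d) (α n δ η : ℝ) (hα : 0 < α) (hn : 2 < n)
    (hδ1 : 1 < δ) (hδn : n < 2 * δ) (hη : 0 < η)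
    (heq : η * (η + n - 2) = ((d : ℝ) - 1) / α ^ 2) :
    2 * α ^ 2 * δ * η < 2 * α ^ 2 * (2 * δ - n) ↔
      ((d : ℝ) - 1) * δ ^ 2 / (n * (2 * δ - n) * (δ - 1)) < α ^ 2 := by
  have hα2 : 0 < α ^ 2 := by positivity
  have hδ0 : 0 < δ := by linarith
  have hdn : 0 < 2 * δ - n := by linarith
  have hden : 0 < n * (2 * δ - n) * (δ - 1) := by
    have : 0 < n := by linarith
    have : 0 < δ - 1 := by linarith
    positivity
  have hd1 : (1:ℝ) ≤ (d:ℝ) - 1 := by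
    have : (2:ℝ) ≤ (d:ℝ) := by exact_mod_cast hd
    linarith
  have heq' : η * (η + n - 2) * α ^ 2 = (d:ℝ) - 1 := by
    field_simp at heq
    linarith [heq]
  rw [div_lt_iff₀ hden]
  constructor
  · intro h
    have hlt : δ * η < 2 * δ - n := by
      have h2 : 0 < 2 * α ^ 2 := by positivity
      nlinarith
    have heq2 : η * (η + n - 2) * α ^ 2 * δ ^ 2 = ((d:ℝ) - 1) * δ ^ 2 := by
      linear_combination δ ^ 2 * heq'
    have h1 : 0 < α ^ 2 * ((2 * δ - n) - δ * η) * (δ * η + (2 * δ - n) + (n - 2) * δ) := by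
      have : 0 < δ * η + (2 * δ - n) + (n - 2) * δ := by nlinarith
      have : 0 < (2 * δ - n) - δ * η := by linarith
      positivity
    nlinarith [h1, heq2]
  · intro h
    have hlt : δ * η < 2 * δ - n := by
      by_contra hge
      push_neg at hge
      have heq2 : η * (η + n - 2) * α ^ 2 * δ ^ 2 = ((d:ℝ) - 1) * δ ^ 2 := by
        linear_combination δ ^ 2 * heq'
      have h1 : 0 ≤ α ^ 2 * (δ * η - (2 * δ - n)) * (δ * η + (2 * δ - n) + (n - 2) * δ) := by
        have h2 : 0 < δ * η + (2 * δ - n) + (n - 2) * δ := by nlinarith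
        have h3 : 0 ≤ δ * η - (2 * δ - n) := by linarith
        positivity
      nlinarith [h1, heq2]
    have h2 : 0 < 2 * α ^ 2 := by positivity
    nlinarith
end
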